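/- Let S(u₁,u₂,u₃,u₄) = u₄¹⁰/4725 − u₄⁷u₃/105 + u₂u₄⁵/15 − u₄u₃³ − u₄³u₁/3 + u₂u₃u₄² − u₂² + u₁u₃ be the genus-4 Schur–Weierstraß polynomial S_{4,3,2,1}. Then for every ξ ∈ ℂ, at u(ξ) = (−ξ⁷/7, −ξ⁵/5, −ξ³/3, −ξ): (∂^j S/∂u₄^j)(u(ξ)) = 0 for j = 0, 1, 2. -/

import Mathlib

open Polynomial in
theorem stmt_14 (S : ℂ → ℂ → ℂ → ℂ → ℂ)
    (hS : ∀ u1 u2 u3 u4, S u1 u2 u3 u4 =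
      u4^10/4725 - u4^7*u3/105 + u2*u4^5/15 - u4*u3^3 - u4^3*u1/3 + u2*u3*u4^2 - u2^2 + u1*u3)
    (ξ : ℂ) :
    ∀ j ≤ 2, iteratedDeriv j (fun t => S (-ξ^7/7) (-ξ^5/5) (-ξ^3/3) t) (-ξ) = 0 := by
  set p : ℂ[X] := C (1/4725) * X^10 - C ((-ξ^3/3)/105) * X^7 + C ((-ξ^5/5)/15) * X^5
      - C ((-ξ^3/3)^3) * X - C ((-ξ^7/7)/3) * X^3 + C ((-ξ^5/5)*(-ξ^3/3)) * X^2
      + C (-(-ξ^5/5)^2 + (-ξ^7/7)*(-ξ^3/3)) with hp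
  have hf : (fun t => S (-ξ^7/7) (-ξ^5/5) (-ξ^3/3) t) = fun t => p.eval t := by
    funext t
    rw [hS, hp]
    simp only [eval_add, eval_sub, eval_mul, eval_pow, eval_C, eval_X]
    ring
  have hd : ∀ (q : ℂ[X]), deriv (fun t : ℂ => q.eval t) = fun t => q.derivative.eval t := by
    intro q; funext t; exact Polynomial.deriv (p := q) (x := t)
  intro j hj
  interval_cases j
  · rw [iteratedDeriv_zero, hS]
    ring
  · rw [iteratedDeriv_one, hf, hd, hp]
    simp only [derivative_add, derivative_sub, derivative_mul, derivative_C, derivative_X,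
      derivative_X_pow, eval_add, eval_sub, eval_mul, eval_pow, eval_C, eval_X, eval_zero,
      eval_one, derivative_zero, derivative_one]
    push_cast
    ring
  · rw [show iteratedDeriv 2 (fun t => S (-ξ^7/7) (-ξ^5/5) (-ξ^3/3) t) = iteratedDeriv (1 + 1) (fun t => S (-ξ^7/7) (-ξ^5/5) (-ξ^3/3) t) from rfl, iteratedDeriv_succ, iteratedDeriv_one, hf, hd, hd, hp]
    simp only [derivative_add, derivative_sub, derivative_mul, derivative_C, derivative_X,
      derivative_X_pow, eval_add, eval_sub, eval_mul, eval_pow, eval_C, eval_X, eval_zero,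
      eval_one, derivative_zero, derivative_one]
    push_cast
    ring
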